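/- Fix u ∈ (0,1), λ_f > 0 and a total observation window T > 0. For N ≥ 2 let Γ_c(N) = e^{−λ_f T/((N−1)·u)} (uniform sampling of N samples over window T), and let V*_N = u(1−u)(1+Γ_c(N))/(N(1−Γ_c(N))+2Γ_c(N)) be the mean squared error of the optimally weighted averaging estimator. Then lim_{N→∞} V*_N = u(1−u)/(1 + λ_f T/(2u)). -/

import Mathlib

open Filter

/-- as the number of samples `N → ∞` over a fixed observation
window `T` (uniform sampling, `Γ_c(N) = e^{-λ_f T/((N-1)u)}`), the mean squared
error of the optimally weighted averaging estimator,
`V*_N = u(1-u)(1+Γ_c(N))/(N(1-Γ_c(N))+2Γ_c(N))`, tends to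
`u(1-u)/(1 + λ_f T/(2u))`. -/
theorem weighted_estimator_mse_limit (u lf T : ℝ)
    (hu : 0 < u) (hu1 : u < 1) (hlf : 0 < lf) (hT : 0 < T) :
    Filter.Tendsto
      (fun N : ℕ =>
        u * (1 - u) * (1 + Real.exp (-(lf * T) / (((N : ℝ) - 1) * u)))
          / ((N : ℝ) * (1 - Real.exp (-(lf * T) / (((N : ℝ) - 1) * u)))
              + 2 * Real.exp (-(lf * T) / (((N : ℝ) - 1) * u))))
      Filter.atTop
      (nhds (u * (1 - u) / (1 + lf * T / (2 * u)))) := by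
  set a := lf * T / u with ha
  have ha0 : 0 < a := div_pos (mul_pos hlf hT) hu
  -- rewrite the exponent
  have hexp : ∀ N : ℕ, -(lf * T) / (((N : ℝ) - 1) * u) = -(a / ((N : ℝ) - 1)) := by
    intro N
    rw [ha, neg_div, div_mul_eq_div_div_swap]
  simp only [hexp]
  -- N-1 → atTop
  have hNm : Tendsto (fun N : ℕ => (N : ℝ) - 1) atTop atTop :=
    tendsto_atTop_add_const_right _ (-1) tendsto_natCast_atTop_atTop
  -- a/(N-1) → 0
  have hx0 : Tendsto (fun N : ℕ => a / ((N : ℝ) - 1)) atTop (nhds 0) :=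
    Tendsto.div_atTop tendsto_const_nhds hNm
  -- within {0}ᶜ
  have hxne : ∀ᶠ N : ℕ in atTop, a / ((N : ℝ) - 1) ≠ 0 := by
    filter_upwards [eventually_ge_atTop 2] with N hN
    have h1 : (1:ℝ) < (N:ℝ) := by exact_mod_cast Nat.lt_of_lt_of_le one_lt_two hN
    have h2 : (0:ℝ) < (N:ℝ) - 1 := by linarith
    exact ne_of_gt (div_pos ha0 h2)
  have hx : Tendsto (fun N : ℕ => a / ((N : ℝ) - 1)) atTop (nhdsWithin 0 {(0:ℝ)}ᶜ) := by
    rw [tendsto_nhdsWithin_iff]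
    exact ⟨hx0, hxne⟩
  -- slope limit: (1 - exp(-t))/t → 1 at 0
  have hslope : Tendsto (fun t : ℝ => (1 - Real.exp (-t)) / t) (nhdsWithin 0 {(0:ℝ)}ᶜ) (nhds 1) := by
    have hd : HasDerivAt (fun t : ℝ => 1 - Real.exp (-t)) 1 0 := by
      have h0 : HasDerivAt Real.exp (Real.exp (-0)) (-0) := Real.hasDerivAt_exp (-0)
      have := (h0.comp 0 (hasDerivAt_neg 0)).const_sub 1
      simpa using this
    have h := hasDerivAt_iff_tendsto_slope.mp hd
    refine h.congr' ?_
    filter_upwards [self_mem_nhdsWithin] with t ht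
    have ht' : t ≠ 0 := ht
    simp [slope_def_field, div_eq_mul_inv]
  -- exp(-(a/(N-1))) → 1
  have he : Tendsto (fun N : ℕ => Real.exp (-(a / ((N : ℝ) - 1)))) atTop (nhds 1) := by
    have : Tendsto (fun N : ℕ => -(a / ((N : ℝ) - 1))) atTop (nhds 0) := by
      simpa using hx0.neg
    simpa [Function.comp_def] using (Real.continuous_exp.tendsto 0).comp this
  -- N/(N-1) → 1 via 1 + 1/(N-1)
  have hinv : Tendsto (fun N : ℕ => 1 / ((N : ℝ) - 1)) atTop (nhds 0) :=
    Tendsto.div_atTop tendsto_const_nhds hNm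
  -- key: N (1 - exp(-(a/(N-1)))) → a
  have hkey : Tendsto (fun N : ℕ => (N : ℝ) * (1 - Real.exp (-(a / ((N : ℝ) - 1))))) atTop (nhds a) := by
    have hprod : Tendsto (fun N : ℕ =>
        ((1 - Real.exp (-(a / ((N : ℝ) - 1)))) / (a / ((N : ℝ) - 1))) *
          (a * (1 + 1 / ((N : ℝ) - 1)))) atTop (nhds (1 * (a * (1 + 0)))) := by
      exact (hslope.comp hx).mul (tendsto_const_nhds.mul (tendsto_const_nhds.add hinv))
    have hprod' : Tendsto (fun N : ℕ =>
        ((1 - Real.exp (-(a / ((N : ℝ) - 1)))) / (a / ((N : ℝ) - 1))) *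
          (a * (1 + 1 / ((N : ℝ) - 1)))) atTop (nhds a) := by
      simpa using hprod
    refine hprod'.congr' ?_
    filter_upwards [eventually_ge_atTop 2] with N hN
    have h1 : (1:ℝ) < (N:ℝ) := by exact_mod_cast Nat.lt_of_lt_of_le one_lt_two hN
    have h2 : ((N:ℝ) - 1) ≠ 0 := by linarith
    field_simp
    ring
  -- combine
  have hnum : Tendsto (fun N : ℕ =>
      u * (1 - u) * (1 + Real.exp (-(a / ((N : ℝ) - 1))))) atTop (nhds (u * (1 - u) * (1 + 1))) :=
    Tendsto.mul tendsto_const_nhds (Tendsto.add tendsto_const_nhds he)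
  have hden : Tendsto (fun N : ℕ =>
      (N : ℝ) * (1 - Real.exp (-(a / ((N : ℝ) - 1)))) +
        2 * Real.exp (-(a / ((N : ℝ) - 1)))) atTop (nhds (a + 2 * 1)) :=
    Tendsto.add hkey (Tendsto.mul
      (tendsto_const_nhds : Tendsto (fun _ : ℕ => (2:ℝ)) atTop (nhds 2)) he)
  have hne : a + 2 * 1 ≠ 0 := by linarith
  have := hnum.div hden hne
  simp only [Pi.div_def] at this
  convert this using 2
  rw [ha]
  have hu' : u ≠ 0 := ne_of_gt hu
  have h2u : 2 * u + lf * T ≠ 0 := by positivity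
  field_simp
  ring
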